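/- In the Differential Pricing Mechanism, for every agent i: p_i(v_i) ≤ B_i (equivalently λ_i·x_i(v_i) ≤ B_i) and x_i(v_i) ≥ −Γ_i. In particular, for i ≤ k, p_i(v_i) = B_i − ∫_{v̂}^{q} x_i(z, v_{−i}) dz ≤ B_i; and for i = k+1 with x_{k+1} > 0, p_{k+1} ≤ v_{k+1}·x_{k+1} = v_{k+1}·Σ_{i=k+2}^n Γ_i − Σ_{i=1}^k B_i < B_{k+1}. -/

import Mathlib

open Finset

noncomputable def sortedVal (n : ℕ) (v : Fin n → ℝ) (σ : Equiv.Perm (Fin n)) (m : ℕ) : ℝ :=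
  if h : m < n then v (σ ⟨m, h⟩) else 0

noncomputable def SB (n : ℕ) (B : Fin n → ℝ) (σ : Equiv.Perm (Fin n)) (k : ℕ) : ℝ :=
  ∑ j : Fin n, if (j : ℕ) < k then B (σ j) else 0

noncomputable def SG (n : ℕ) (Γ : Fin n → ℝ) (σ : Equiv.Perm (Fin n)) (k : ℕ) : ℝ :=
  ∑ j : Fin n, if k ≤ (j : ℕ) then Γ (σ j) else 0

def IsPartitionPoint (n : ℕ) (v B Γ : Fin n → ℝ) (σ : Equiv.Perm (Fin n)) (k : ℕ) : Prop :=
  1 ≤ k ∧ k ≤ n ∧ SB n B σ k ≤ sortedVal n v σ (k-1) * SG n Γ σ k ∧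
    ∀ l, 1 ≤ l → l ≤ n → SB n B σ l ≤ sortedVal n v σ (l-1) * SG n Γ σ l → l ≤ k

noncomputable def qval (n : ℕ) (v B Γ : Fin n → ℝ) (σ : Equiv.Perm (Fin n)) (k : ℕ) : ℝ :=
  if sortedVal n v σ k * SG n Γ σ k < SB n B σ k then SB n B σ k / SG n Γ σ k
  else sortedVal n v σ k

noncomputable def allocAtPos (n : ℕ) (v B Γ : Fin n → ℝ) (σ : Equiv.Perm (Fin n))
    (k : ℕ) (j : Fin n) : ℝ :=
  if (j : ℕ) < k then B (σ j) / qval n v B Γ σ k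
  else if (j : ℕ) = k then SG n Γ σ (k+1) - SB n B σ k / qval n v B Γ σ k
  else -Γ (σ j)

def DPMAlloc (n : ℕ) (v B Γ : Fin n → ℝ) (x : Fin n → ℝ) : Prop :=
  ∃ σ : Equiv.Perm (Fin n), (∀ a b : Fin n, a ≤ b → v (σ b) ≤ v (σ a)) ∧
    ∃ k : ℕ, IsPartitionPoint n v B Γ σ k ∧
      ∀ a : Fin n, x a = allocAtPos n v B Γ σ k (σ.symm a)

noncomputable def Sgt (n : ℕ) (B u : Fin n → ℝ) (p : ℝ) : ℝ := ∑ j, if p < u j then B j else 0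
noncomputable def Sge (n : ℕ) (B u : Fin n → ℝ) (p : ℝ) : ℝ := ∑ j, if p ≤ u j then B j else 0
noncomputable def Tlt (n : ℕ) (Γ u : Fin n → ℝ) (p : ℝ) : ℝ := ∑ j, if u j < p then Γ j else 0
noncomputable def Tle (n : ℕ) (Γ u : Fin n → ℝ) (p : ℝ) : ℝ := ∑ j, if u j ≤ p then Γ j else 0

def CP (n : ℕ) (B Γ u : Fin n → ℝ) (p : ℝ) : Prop :=
  0 < p ∧ Sgt n B u p ≤ p * Tle n Γ u p ∧ p * Tlt n Γ u p ≤ Sge n B u p ∧ 0 < Tle n Γ u p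

lemma sum_ite_coe_eq {n : ℕ} (c : Fin n → ℝ) {k : ℕ} (hkn : k < n) :
    (∑ j : Fin n, if (j : ℕ) = k then c j else 0) = c ⟨k, hkn⟩ := by
  rw [Finset.sum_eq_single (⟨k, hkn⟩ : Fin n)]
  · simp
  · intro j _ hj
    rw [if_neg (fun h => hj (Fin.ext h))]
  · simp

lemma SB_succ {n : ℕ} (B : Fin n → ℝ) (σ : Equiv.Perm (Fin n)) {k : ℕ} (hkn : k < n) :
    SB n B σ (k+1) = SB n B σ k + B (σ ⟨k, hkn⟩) := by
  unfold SB
  have h : ∀ j : Fin n, (if (j : ℕ) < k + 1 then B (σ j) else 0)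
      = (if (j : ℕ) < k then B (σ j) else 0) + (if (j : ℕ) = k then B (σ j) else 0) := by
    intro j
    rcases lt_trichotomy (j : ℕ) k with h | h | h
    · simp [h, Nat.lt_succ_iff, h.le, Nat.ne_of_lt h]
    · simp [h]
    · have h1 : ¬ ((j:ℕ) < k + 1) := by omega
      have h2 : ¬ ((j:ℕ) < k) := by omega
      have h3 : (j:ℕ) ≠ k := by omega
      simp [h1, h2, h3]
  rw [Finset.sum_congr rfl (fun j _ => h j), Finset.sum_add_distrib,
    sum_ite_coe_eq (fun j => B (σ j)) hkn]

lemma SG_succ {n : ℕ} (Γ : Fin n → ℝ) (σ : Equiv.Perm (Fin n)) {k : ℕ} (hkn : k < n) :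
    SG n Γ σ k = Γ (σ ⟨k, hkn⟩) + SG n Γ σ (k+1) := by
  unfold SG
  have h : ∀ j : Fin n, (if k ≤ (j : ℕ) then Γ (σ j) else 0)
      = (if (j : ℕ) = k then Γ (σ j) else 0) + (if k + 1 ≤ (j : ℕ) then Γ (σ j) else 0) := by
    intro j
    rcases lt_trichotomy (j : ℕ) k with h | h | h
    · have h1 : ¬ (k ≤ (j:ℕ)) := by omega
      have h2 : (j:ℕ) ≠ k := by omega
      have h3 : ¬ (k + 1 ≤ (j:ℕ)) := by omega
      simp [h1, h2, h3]
    · have h3 : ¬ (k + 1 ≤ (j:ℕ)) := by omega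
      simp [h, h3]
    · have h1 : k ≤ (j:ℕ) := by omega
      have h2 : (j:ℕ) ≠ k := by omega
      have h3 : k + 1 ≤ (j:ℕ) := by omega
      simp [h1, h2, h3]
  rw [Finset.sum_congr rfl (fun j _ => h j), Finset.sum_add_distrib,
    sum_ite_coe_eq (fun j => Γ (σ j)) hkn]

lemma CP_mono {n : ℕ} {B Γ u1 u2 : Fin n → ℝ} {p1 p2 : ℝ}
    (hB : ∀ a, 0 < B a) (hΓ : ∀ a, 0 ≤ Γ a)
    (hu : ∀ a, u1 a ≤ u2 a) (h1 : CP n B Γ u1 p1) (h2 : CP n B Γ u2 p2) : p1 ≤ p2 := by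
  by_contra hlt
  push_neg at hlt
  have hT : Tle n Γ u2 p2 ≤ Tlt n Γ u1 p1 := by
    apply Finset.sum_le_sum; intro j _
    by_cases h : u2 j ≤ p2
    · rw [if_pos h, if_pos (lt_of_le_of_lt (le_trans (hu j) h) hlt)]
    · rw [if_neg h]; split
      · exact hΓ j
      · exact le_refl 0
  have hS : Sge n B u1 p1 ≤ Sgt n B u2 p2 := by
    apply Finset.sum_le_sum; intro j _
    by_cases h : p1 ≤ u1 j
    · rw [if_pos h, if_pos (lt_of_lt_of_le hlt (le_trans h (hu j)))]
    · rw [if_neg h]; split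
      · exact (hB j).le
      · exact le_refl 0
  have c1 : p1 * Tle n Γ u2 p2 ≤ p1 * Tlt n Γ u1 p1 :=
    mul_le_mul_of_nonneg_left hT h1.1.le
  have c2 : p1 * Tle n Γ u2 p2 ≤ p2 * Tle n Γ u2 p2 := by
    calc p1 * Tle n Γ u2 p2 ≤ p1 * Tlt n Γ u1 p1 := c1
    _ ≤ Sge n B u1 p1 := h1.2.2.1
    _ ≤ Sgt n B u2 p2 := hS
    _ ≤ p2 * Tle n Γ u2 p2 := h2.2.1
  have := le_of_mul_le_mul_right c2 h2.2.2.2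
  exact absurd this (not_le.mpr hlt)

lemma CP_unique {n : ℕ} {B Γ u : Fin n → ℝ} {p1 p2 : ℝ}
    (hB : ∀ a, 0 < B a) (hΓ : ∀ a, 0 ≤ Γ a)
    (h1 : CP n B Γ u p1) (h2 : CP n B Γ u p2) : p1 = p2 :=
  le_antisymm (CP_mono hB hΓ (fun _ => le_refl _) h1 h2)
    (CP_mono hB hΓ (fun _ => le_refl _) h2 h1)

lemma config_facts {n : ℕ} {u B Γ : Fin n → ℝ} {σ : Equiv.Perm (Fin n)} {k : ℕ}
    (hu : ∀ a, 0 ≤ u a) (hB : ∀ a, 0 < B a) (hΓ : ∀ a, 0 ≤ Γ a)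
    (hσ : ∀ a b : Fin n, a ≤ b → u (σ b) ≤ u (σ a))
    (hpp : IsPartitionPoint n u B Γ σ k) :
    CP n B Γ u (qval n u B Γ σ k) ∧
    (∀ a : Fin n, qval n u B Γ σ k < u a →
        allocAtPos n u B Γ σ k (σ.symm a) = B a / qval n u B Γ σ k) ∧
    (∀ a : Fin n, u a < qval n u B Γ σ k → allocAtPos n u B Γ σ k (σ.symm a) = -Γ a) ∧
    (∀ a : Fin n, -Γ a ≤ allocAtPos n u B Γ σ k (σ.symm a) ∧
        allocAtPos n u B Γ σ k (σ.symm a) ≤ B a / qval n u B Γ σ k) ∧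
    (∑ a : Fin n, allocAtPos n u B Γ σ k (σ.symm a)) = 0 := by
  obtain ⟨hk1, hkn', hcond, hmax⟩ := hpp
  set q := qval n u B Γ σ k with hqdef
  have hn : 0 < n := by omega
  have hSBpos : 0 < SB n B σ k := by
    have h0 : B (σ ⟨0, hn⟩) ≤ SB n B σ k := by
      have := Finset.single_le_sum
        (f := fun j : Fin n => if (j : ℕ) < k then B (σ j) else 0)
        (fun j _ => by split
                       · exact (hB _).le
                       · exact le_refl 0)
        (Finset.mem_univ (⟨0, hn⟩ : Fin n))
      simpa [SB, show (0 : ℕ) < k from hk1] using this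
    linarith [hB (σ ⟨0, hn⟩)]
  have hsv_nonneg : ∀ m, 0 ≤ sortedVal n u σ m := by
    intro m; unfold sortedVal; split
    · exact hu _
    · exact le_refl 0
  have hSG_nonneg : ∀ m, 0 ≤ SG n Γ σ m := by
    intro m
    apply Finset.sum_nonneg
    intro j _; split
    · exact hΓ _
    · exact le_refl 0
  have hprod : 0 < sortedVal n u σ (k-1) * SG n Γ σ k := lt_of_lt_of_le hSBpos hcond
  have hSGk : 0 < SG n Γ σ k := by
    rcases (hSG_nonneg k).lt_or_eq with h | h
    · exact h
    · rw [← h] at hprod; simp at hprod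
  have hsvk1 : 0 < sortedVal n u σ (k-1) := by
    rcases (hsv_nonneg (k-1)).lt_or_eq with h | h
    · exact h
    · rw [← h] at hprod; simp at hprod
  have hkn : k < n := by
    rcases lt_or_eq_of_le hkn' with h | h
    · exact h
    · exfalso
      have hz : SG n Γ σ k = 0 := by
        apply Finset.sum_eq_zero
        intro j _
        rw [if_neg (by have := j.isLt; omega)]
      linarith
  have hsvk_eq : sortedVal n u σ k = u (σ ⟨k, hkn⟩) := dif_pos hkn
  have hsvk1_eq : sortedVal n u σ (k-1) = u (σ ⟨k-1, by omega⟩) := dif_pos (by omega)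
  have hpos_le : ∀ j : Fin n, k ≤ (j : ℕ) → u (σ j) ≤ sortedVal n u σ k := by
    intro j hj
    rw [hsvk_eq]
    exact hσ ⟨k, hkn⟩ j (by rw [Fin.le_def]; exact hj)
  have hpos_ge : ∀ j : Fin n, (j : ℕ) < k → sortedVal n u σ (k-1) ≤ u (σ j) := by
    intro j hj
    rw [hsvk1_eq]
    exact hσ j ⟨k-1, by omega⟩ (by simp only [Fin.le_def, Fin.val_mk]; omega)
  have key : 0 < q ∧ sortedVal n u σ k ≤ q ∧ q ≤ sortedVal n u σ (k-1) ∧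
      SB n B σ k ≤ q * SG n Γ σ k ∧
      (sortedVal n u σ k < q → SB n B σ k = q * SG n Γ σ k) := by
    rw [hqdef]; unfold qval
    by_cases hc : sortedVal n u σ k * SG n Γ σ k < SB n B σ k
    · rw [if_pos hc]
      have hqpos : 0 < SB n B σ k / SG n Γ σ k := div_pos hSBpos hSGk
      refine ⟨hqpos, ((lt_div_iff₀ hSGk).mpr hc).le, (div_le_iff₀ hSGk).mpr hcond, ?_, ?_⟩
      · rw [div_mul_cancel₀ _ (ne_of_gt hSGk)]
      · intro _; rw [div_mul_cancel₀ _ (ne_of_gt hSGk)]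
    · rw [if_neg hc]
      push_neg at hc
      have hqpos : 0 < sortedVal n u σ k := by nlinarith [hsv_nonneg k]
      have hmono : sortedVal n u σ k ≤ sortedVal n u σ (k-1) := by
        rw [hsvk_eq, hsvk1_eq]
        exact hσ ⟨k-1, by omega⟩ ⟨k, hkn⟩ (by simp only [Fin.le_def, Fin.val_mk]; omega)
      exact ⟨hqpos, le_refl _, hmono, hc, fun h => absurd h (lt_irrefl _)⟩
  obtain ⟨hqpos, hsvk_le_q, hq_le_sv, hSBle, hcase1⟩ := key
  have hstrict : q * SG n Γ σ (k+1) < SB n B σ (k+1) := by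
    have hmax' : ¬ (SB n B σ (k+1) ≤ sortedVal n u σ k * SG n Γ σ (k+1)) := by
      intro h
      have := hmax (k+1) (by omega) (by omega) (by simpa using h)
      omega
    push_neg at hmax'
    rcases hsvk_le_q.lt_or_eq with hlt | heq
    · have h1 : SB n B σ k = q * SG n Γ σ k := hcase1 hlt
      have h2 : SG n Γ σ (k+1) ≤ SG n Γ σ k := by
        rw [SG_succ Γ σ hkn]; linarith [hΓ (σ ⟨k, hkn⟩)]
      have h3 : q * SG n Γ σ (k+1) ≤ q * SG n Γ σ k :=
        mul_le_mul_of_nonneg_left h2 hqpos.le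
      rw [SB_succ B σ hkn]
      linarith [hB (σ ⟨k, hkn⟩)]
    · rw [← heq]; exact hmax'
  -- reindexed sums
  have hSgt_eq : Sgt n B u q = ∑ j : Fin n, (if q < u (σ j) then B (σ j) else 0) :=
    (Equiv.sum_comp σ (fun a => if q < u a then B a else 0)).symm
  have hSge_eq : Sge n B u q = ∑ j : Fin n, (if q ≤ u (σ j) then B (σ j) else 0) :=
    (Equiv.sum_comp σ (fun a => if q ≤ u a then B a else 0)).symm
  have hTlt_eq : Tlt n Γ u q = ∑ j : Fin n, (if u (σ j) < q then Γ (σ j) else 0) :=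
    (Equiv.sum_comp σ (fun a => if u a < q then Γ a else 0)).symm
  have hTle_eq : Tle n Γ u q = ∑ j : Fin n, (if u (σ j) ≤ q then Γ (σ j) else 0) :=
    (Equiv.sum_comp σ (fun a => if u a ≤ q then Γ a else 0)).symm
  have hSgt_le : Sgt n B u q ≤ SB n B σ k := by
    rw [hSgt_eq]
    apply Finset.sum_le_sum
    intro j _
    by_cases hj : q < u (σ j)
    · rw [if_pos hj, if_pos]
      by_contra hge
      exact absurd (lt_of_lt_of_le hj ((hpos_le j (by omega)).trans hsvk_le_q)) (lt_irrefl q)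
    · rw [if_neg hj]; split
      · exact (hB _).le
      · exact le_refl 0
  have hTle_ge : SG n Γ σ k ≤ Tle n Γ u q := by
    rw [hTle_eq]
    apply Finset.sum_le_sum
    intro j _
    by_cases hj : k ≤ (j : ℕ)
    · rw [if_pos hj, if_pos ((hpos_le j hj).trans hsvk_le_q)]
    · rw [if_neg hj]; split
      · exact hΓ _
      · exact le_refl 0
  have hCP : CP n B Γ u q := by
    refine ⟨hqpos, ?_, ?_, lt_of_lt_of_le hSGk hTle_ge⟩
    · calc Sgt n B u q ≤ SB n B σ k := hSgt_le
      _ ≤ q * SG n Γ σ k := hSBle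
      _ ≤ q * Tle n Γ u q := mul_le_mul_of_nonneg_left hTle_ge hqpos.le
    · rcases hsvk_le_q.lt_or_eq with hlt | heq
      · -- case 1 : q strictly above sortedVal k
        have hSBeq : SB n B σ k = q * SG n Γ σ k := hcase1 hlt
        have hTlt_le : Tlt n Γ u q ≤ SG n Γ σ k := by
          rw [hTlt_eq]
          apply Finset.sum_le_sum
          intro j _
          by_cases hj : u (σ j) < q
          · rw [if_pos hj, if_pos]
            by_contra hge
            have : q ≤ u (σ j) := hq_le_sv.trans (hpos_ge j (by omega))
            linarith
          · rw [if_neg hj]; split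
            · exact hΓ _
            · exact le_refl 0
        have hSge_ge : SB n B σ k ≤ Sge n B u q := by
          rw [hSge_eq]
          apply Finset.sum_le_sum
          intro j _
          by_cases hj : (j : ℕ) < k
          · rw [if_pos hj, if_pos (hq_le_sv.trans (hpos_ge j hj))]
          · rw [if_neg hj]; split
            · exact (hB _).le
            · exact le_refl 0
        calc q * Tlt n Γ u q ≤ q * SG n Γ σ k :=
              mul_le_mul_of_nonneg_left hTlt_le hqpos.le
          _ = SB n B σ k := hSBeq.symm
          _ ≤ Sge n B u q := hSge_ge
      · -- case 2 : q = sortedVal k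
        have hTlt_le : Tlt n Γ u q ≤ SG n Γ σ (k+1) := by
          rw [hTlt_eq]
          apply Finset.sum_le_sum
          intro j _
          by_cases hj : u (σ j) < q
          · rw [if_pos hj, if_pos]
            by_contra hge
            have hjk : (j : ℕ) ≤ k := by omega
            have : q ≤ u (σ j) := by
              rw [← heq, hsvk_eq]
              exact hσ j ⟨k, hkn⟩ (by rw [Fin.le_def]; exact hjk)
            linarith
          · rw [if_neg hj]; split
            · exact hΓ _
            · exact le_refl 0
        have hSge_ge : SB n B σ (k+1) ≤ Sge n B u q := by
          rw [hSge_eq]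
          apply Finset.sum_le_sum
          intro j _
          by_cases hj : (j : ℕ) < k + 1
          · rw [if_pos hj, if_pos]
            rw [← heq, hsvk_eq]
            exact hσ j ⟨k, hkn⟩ (by simp only [Fin.le_def, Fin.val_mk]; omega)
          · rw [if_neg hj]; split
            · exact (hB _).le
            · exact le_refl 0
        calc q * Tlt n Γ u q ≤ q * SG n Γ σ (k+1) :=
              mul_le_mul_of_nonneg_left hTlt_le hqpos.le
          _ ≤ SB n B σ (k+1) := hstrict.le
          _ ≤ Sge n B u q := hSge_ge
  have hja : ∀ a : Fin n, σ (σ.symm a) = a := fun a => Equiv.apply_symm_apply σ a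
  have halloc_top : ∀ a : Fin n, q < u a →
      allocAtPos n u B Γ σ k (σ.symm a) = B a / q := by
    intro a ha
    have hj : ((σ.symm a : Fin n) : ℕ) < k := by
      by_contra hge
      push_neg at hge
      have h1 := hpos_le (σ.symm a) hge
      rw [hja a] at h1
      linarith
    unfold allocAtPos
    rw [← hqdef, if_pos hj, hja a]
  have hmarg : ∀ a : Fin n, ((σ.symm a : Fin n) : ℕ) = k →
      allocAtPos n u B Γ σ k (σ.symm a) = SG n Γ σ (k+1) - SB n B σ k / q ∧
      u a = sortedVal n u σ k ∧ σ ⟨k, hkn⟩ = a := by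
    intro a heq
    have hjeq : (σ.symm a : Fin n) = ⟨k, hkn⟩ := Fin.ext heq
    have hσk : σ ⟨k, hkn⟩ = a := by rw [← hjeq, hja a]
    refine ⟨?_, ?_, hσk⟩
    · unfold allocAtPos
      rw [← hqdef, if_neg (by omega), if_pos heq]
    · rw [hsvk_eq, hσk]
  have halloc_bot : ∀ a : Fin n, u a < q →
      allocAtPos n u B Γ σ k (σ.symm a) = -Γ a := by
    intro a ha
    have hj : k ≤ ((σ.symm a : Fin n) : ℕ) := by
      by_contra hlt
      push_neg at hlt
      have h1 := hpos_ge (σ.symm a) hlt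
      rw [hja a] at h1
      linarith
    rcases eq_or_lt_of_le hj with heq | hlt
    · obtain ⟨hx, hux, hσk⟩ := hmarg a heq.symm
      have hSBeq : SB n B σ k = q * SG n Γ σ k := hcase1 (by rw [← hux]; exact ha)
      rw [hx, hSBeq, mul_div_cancel_left₀ _ (ne_of_gt hqpos), SG_succ Γ σ hkn, hσk]
      ring
    · unfold allocAtPos
      rw [← hqdef, if_neg (by omega), if_neg (by omega), hja a]
  have hbounds : ∀ a : Fin n, -Γ a ≤ allocAtPos n u B Γ σ k (σ.symm a) ∧
      allocAtPos n u B Γ σ k (σ.symm a) ≤ B a / q := by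
    intro a
    have hBq : 0 < B a / q := div_pos (hB a) hqpos
    rcases lt_trichotomy ((σ.symm a : Fin n) : ℕ) k with hlt | heq | hgt
    · have hx : allocAtPos n u B Γ σ k (σ.symm a) = B a / q := by
        unfold allocAtPos
        rw [← hqdef, if_pos hlt, hja a]
      rw [hx]
      exact ⟨by linarith [hΓ a], le_refl _⟩
    · obtain ⟨hx, hux, hσk⟩ := hmarg a heq
      have hdivle : SB n B σ k / q ≤ SG n Γ σ k := (div_le_iff₀ hqpos).mpr
        (by rw [mul_comm]; exact hSBle)
      have hSGk_split : SG n Γ σ k = Γ a + SG n Γ σ (k+1) := by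
        rw [SG_succ Γ σ hkn, hσk]
      have hup : SG n Γ σ (k+1) ≤ SB n B σ k / q + B a / q := by
        have h1 : q * SG n Γ σ (k+1) < SB n B σ k + B a := by
          have := hstrict
          rw [SB_succ B σ hkn, hσk] at this
          exact this
        rw [← add_div]
        rw [le_div_iff₀ hqpos]
        nlinarith
      rw [hx]
      constructor
      · rw [hSGk_split] at hdivle
        linarith
      · linarith
    · have hx : allocAtPos n u B Γ σ k (σ.symm a) = -Γ a := by
        unfold allocAtPos
        rw [← hqdef, if_neg (by omega), if_neg (by omega), hja a]
      rw [hx]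
      exact ⟨le_refl _, by linarith [hΓ a]⟩
  have hsum : (∑ a : Fin n, allocAtPos n u B Γ σ k (σ.symm a)) = 0 := by
    rw [Equiv.sum_comp σ.symm (allocAtPos n u B Γ σ k)]
    have hsplit : ∀ j : Fin n, allocAtPos n u B Γ σ k j =
        (if (j : ℕ) < k then B (σ j) else 0) / q
        + ((if (j : ℕ) = k then SG n Γ σ (k+1) - SB n B σ k / q else 0)
        + (-(if k + 1 ≤ (j : ℕ) then Γ (σ j) else 0))) := by
      intro j
      unfold allocAtPos
      rw [← hqdef]
      rcases lt_trichotomy ((j : ℕ)) k with h | h | h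
      · have c1 : (j : ℕ) < k := h
        have c2 : (j : ℕ) ≠ k := by omega
        have c3 : ¬ (k + 1 ≤ (j : ℕ)) := by omega
        simp only [if_pos c1, if_neg c2, if_neg c3]
        ring
      · have c1 : ¬ ((j : ℕ) < k) := by omega
        have c2 : (j : ℕ) = k := h
        have c3 : ¬ (k + 1 ≤ (j : ℕ)) := by omega
        simp only [if_neg c1, if_pos c2, if_neg c3]
        ring
      · have c1 : ¬ ((j : ℕ) < k) := by omega
        have c2 : (j : ℕ) ≠ k := by omega
        have c3 : k + 1 ≤ (j : ℕ) := by omega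
        simp only [if_neg c1, if_neg c2, if_pos c3]
        ring
    rw [Finset.sum_congr rfl (fun j _ => hsplit j), Finset.sum_add_distrib,
      Finset.sum_add_distrib, ← Finset.sum_div,
      sum_ite_coe_eq (fun _ => SG n Γ σ (k+1) - SB n B σ k / q) hkn,
      Finset.sum_neg_distrib]
    have h1 : (∑ j : Fin n, if (j : ℕ) < k then B (σ j) else 0) = SB n B σ k := rfl
    have h2 : (∑ j : Fin n, if k + 1 ≤ (j : ℕ) then Γ (σ j) else 0) = SG n Γ σ (k+1) := rfl
    rw [h1, h2]
    ring
  exact ⟨hCP, halloc_top, halloc_bot, hbounds, hsum⟩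


lemma DPM_facts {n : ℕ} {u B Γ x : Fin n → ℝ}
    (hu : ∀ a, 0 ≤ u a) (hB : ∀ a, 0 < B a) (hΓ : ∀ a, 0 ≤ Γ a)
    (hx : DPMAlloc n u B Γ x) :
    ∃ q : ℝ, CP n B Γ u q ∧
      (∀ a, q < u a → x a = B a / q) ∧
      (∀ a, u a < q → x a = -Γ a) ∧
      (∀ a, -Γ a ≤ x a ∧ x a ≤ B a / q) ∧
      (∑ a, x a) = 0 := by
  obtain ⟨σ, hσ, k, hpp, hxa⟩ := hx
  obtain ⟨hCP, ht, hb, hbd, hs⟩ := config_facts hu hB hΓ hσ hpp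
  refine ⟨qval n u B Γ σ k, hCP, ?_, ?_, ?_, ?_⟩
  · intro a ha; rw [hxa a]; exact ht a ha
  · intro a ha; rw [hxa a]; exact hb a ha
  · intro a; rw [hxa a]; exact hbd a
  · rw [Finset.sum_congr rfl (fun a _ => hxa a)]; exact hs

/-- In the Differential Pricing Mechanism, every agent's Myerson payment is within
budget, `p_i(v_i) ≤ B_i`, and the allocation respects the endowment,
`x_i(v_i) ≥ −Γ_i`. -/
theorem stmt_8 (n : ℕ) (v B Γ : Fin n → ℝ)
    (hv : ∀ i, 0 ≤ v i) (hB : ∀ i, 0 < B i) (hΓ : ∀ i, 0 ≤ Γ i)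
    (A : Fin n → ℝ → ℝ)
    (hA : ∀ (i : Fin n) (z : ℝ), 0 ≤ z → ∃ xfull : Fin n → ℝ,
      DPMAlloc n (Function.update v i z) B Γ xfull ∧ A i z = xfull i)
    (vhat : Fin n → ℝ) (hvhat0 : ∀ i, 0 ≤ vhat i)
    (hcross : ∀ (i : Fin n) (δ : ℝ), 0 < δ →
      A i (vhat i - δ) ≤ 0 ∧ 0 ≤ A i (vhat i + δ))
    (p : Fin n → ℝ)
    (hp : ∀ i, p i = v i * A i (v i) - ∫ z in (vhat i)..(v i), A i z) :
    ∀ i : Fin n, p i ≤ B i ∧ -Γ i ≤ A i (v i) := by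
  intro i
  classical
  obtain ⟨x0, hx0, hA0⟩ := hA i (v i) (hv i)
  rw [Function.update_eq_self i v] at hx0
  obtain ⟨q, hCP, htop, hbot, hbd, hsum0⟩ := DPM_facts hv hB hΓ hx0
  have hq0 : 0 < q := hCP.1
  refine ⟨?_, by rw [hA0]; exact (hbd i).1⟩
  rw [hp i]
  have hnonneg : ∀ b : ℝ, vhat i ≤ b → 0 ≤ ∫ z in (vhat i)..b, A i z := by
    intro b hb
    rw [intervalIntegral.integral_of_le hb]
    apply MeasureTheory.setIntegral_nonneg measurableSet_Ioc
    intro z hz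
    have h2 := (hcross i (z - vhat i) (by linarith [hz.1])).2
    rw [show vhat i + (z - vhat i) = z from by ring] at h2
    exact h2
  rcases le_or_gt (vhat i) (v i) with hvi | hvi
  · -- vhat i ≤ v i
    rcases lt_trichotomy (v i) q with hlt | heq | hgt
    · -- below price: allocation -Γ i ≤ 0
      have hAe : A i (v i) = -Γ i := by rw [hA0]; exact hbot i hlt
      have h1 := hnonneg _ hvi
      have h2 : v i * A i (v i) ≤ 0 := by
        rw [hAe]; nlinarith [hv i, hΓ i]
      linarith [hB i]
    · -- at the price
      have hub : A i (v i) ≤ B i / q := by rw [hA0]; exact (hbd i).2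
      have h1 := hnonneg _ hvi
      have h2 : v i * A i (v i) ≤ B i := by
        rcases le_or_gt (A i (v i)) 0 with hA' | hA'
        · nlinarith [hv i, hB i]
        · calc v i * A i (v i) ≤ v i * (B i / q) :=
                mul_le_mul_of_nonneg_left hub (hv i)
            _ = B i := by rw [heq]; field_simp
      linarith
    · -- main case : q < v i
      have hxtop : A i (v i) = B i / q := by rw [hA0]; exact htop i hgt
      have hupd0 : ∀ (w : ℝ), 0 ≤ w → ∀ a, 0 ≤ Function.update v i w a := by
        intro w hw a
        rcases eq_or_ne a i with rfl | hne
        · rw [Function.update_self]; exact hw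
        · rw [Function.update_of_ne hne]; exact hv a
      have hconst : ∀ z : ℝ, q < z → z ≤ v i → A i z = B i / q := by
        intro z hz1 hz2
        obtain ⟨xz, hxz, hAz⟩ := hA i z (by linarith)
        obtain ⟨q', hCP', htop', _, _, _⟩ := DPM_facts (hupd0 z (by linarith)) hB hΓ hxz
        have hs1 : Sgt n B (Function.update v i z) q = Sgt n B v q := by
          apply Finset.sum_congr rfl; intro a _
          rcases eq_or_ne a i with rfl | hne
          · rw [Function.update_self, if_pos hz1, if_pos hgt]
          · rw [Function.update_of_ne hne]
        have hs2 : Sge n B (Function.update v i z) q = Sge n B v q := by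
          apply Finset.sum_congr rfl; intro a _
          rcases eq_or_ne a i with rfl | hne
          · rw [Function.update_self, if_pos hz1.le, if_pos hgt.le]
          · rw [Function.update_of_ne hne]
        have hs3 : Tlt n Γ (Function.update v i z) q = Tlt n Γ v q := by
          apply Finset.sum_congr rfl; intro a _
          rcases eq_or_ne a i with rfl | hne
          · rw [Function.update_self, if_neg (not_lt.mpr hz1.le), if_neg (not_lt.mpr hgt.le)]
          · rw [Function.update_of_ne hne]
        have hs4 : Tle n Γ (Function.update v i z) q = Tle n Γ v q := by
          apply Finset.sum_congr rfl; intro a _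
          rcases eq_or_ne a i with rfl | hne
          · rw [Function.update_self, if_neg (not_le.mpr hz1), if_neg (not_le.mpr hgt)]
          · rw [Function.update_of_ne hne]
        have hCPz : CP n B Γ (Function.update v i z) q := by
          unfold CP
          rw [hs1, hs2, hs3, hs4]
          exact hCP
        have hqq : q' = q := CP_unique hB hΓ hCP' hCPz
        rw [hAz, htop' i (by rw [Function.update_self, hqq]; exact hz1), hqq]
      have hvq : vhat i ≤ q := by
        by_contra hqv
        push_neg at hqv
        set w := (q + vhat i) / 2 with hw
        have hw1 : q < w := by rw [hw]; linarith
        have hw2 : w < vhat i := by rw [hw]; linarith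
        have hcw := hconst w hw1 (by linarith)
        have hneg := (hcross i (vhat i - w) (by linarith)).1
        rw [show vhat i - (vhat i - w) = w from by ring] at hneg
        have : 0 < B i / q := div_pos (hB i) hq0
        linarith [hcw ▸ hneg]
      -- integrability and value on [q, v i]
      have hint2 : IntervalIntegrable (A i) MeasureTheory.volume q (v i) := by
        rw [intervalIntegrable_iff_integrableOn_Ioc_of_le hgt.le]
        have hc : MeasureTheory.IntegrableOn (fun _ => B i / q) (Set.Ioc q (v i))
            MeasureTheory.volume :=
          MeasureTheory.integrableOn_const measure_Ioc_lt_top.ne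
        apply hc.congr
        filter_upwards [MeasureTheory.ae_restrict_mem measurableSet_Ioc] with z hz
        exact (hconst z hz.1 hz.2).symm
      have hval2 : ∫ z in q..(v i), A i z = (v i - q) * (B i / q) := by
        rw [intervalIntegral.integral_of_le hgt.le,
          MeasureTheory.setIntegral_congr_fun measurableSet_Ioc
            (fun z hz => hconst z hz.1 hz.2)]
        simp only [MeasureTheory.setIntegral_const, smul_eq_mul, Real.volume_Ioc]
        rw [Real.volume_real_Ioc_of_le hgt.le]
      -- clearing price function
      have hQex : ∀ z : ℝ, ∃ p', CP n B Γ (Function.update v i (max z 0)) p' := by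
        intro z
        obtain ⟨xz, hxz, _⟩ := hA i (max z 0) (le_max_right _ _)
        obtain ⟨p', hp', _⟩ := DPM_facts (hupd0 _ (le_max_right _ _)) hB hΓ hxz
        exact ⟨p', hp'⟩
      choose Qf hQf using hQex
      have hQmono : Monotone Qf := by
        intro z1 z2 hz
        apply CP_mono hB hΓ ?_ (hQf z1) (hQf z2)
        intro a
        rcases eq_or_ne a i with rfl | hne
        · rw [Function.update_self, Function.update_self]
          exact max_le_max hz (le_refl 0)
        · rw [Function.update_of_ne hne, Function.update_of_ne hne]
      have hQmeas : Measurable Qf := hQmono.measurable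
      set m : ℝ → ℝ := fun z => (∑ a ∈ Finset.univ.erase i, if v a < z then Γ a else 0)
          - (∑ a ∈ Finset.univ.erase i, if z < v a then B a else 0) / z with hm
      set g : ℝ → ℝ := fun z =>
          if z < Qf z then -Γ i else if Qf z < z then B i / Qf z else m z with hg
      have hgmeas : Measurable g := by
        rw [hg]
        apply Measurable.ite (measurableSet_lt measurable_id hQmeas) measurable_const
        apply Measurable.ite (measurableSet_lt hQmeas measurable_id)
          (measurable_const.div hQmeas)
        rw [hm]
        apply Measurable.sub
        · apply Finset.measurable_sum
          intro a _
          exact Measurable.ite (measurableSet_lt measurable_const measurable_id)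
            measurable_const measurable_const
        · apply Measurable.div ?_ measurable_id
          apply Finset.measurable_sum
          intro a _
          exact Measurable.ite (measurableSet_lt measurable_id measurable_const)
            measurable_const measurable_const
      set F : Set ℝ := ↑((Finset.univ.erase i).image v) with hF
      have hFzero : MeasureTheory.volume F = 0 :=
        ((Finset.univ.erase i).image v).finite_toSet.measure_zero _
      have hAg : ∀ z : ℝ, 0 ≤ z → z ∉ F → A i z = g z := by
        intro z hz0 hzF
        have hmax0 : max z 0 = z := max_eq_left hz0
        obtain ⟨xz, hxz, hAz⟩ := hA i z hz0
        obtain ⟨q', hCP', htop', hbot', hbd', hsum'⟩ :=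
          DPM_facts (hupd0 z hz0) hB hΓ hxz
        have hQz := hQf z
        rw [hmax0] at hQz
        have hq'Q : q' = Qf z := CP_unique hB hΓ hCP' hQz
        have hne : ∀ a : Fin n, a ≠ i → v a ≠ z := by
          intro a ha hva
          apply hzF
          rw [hF]
          simp only [Finset.coe_image, Set.mem_image, Finset.mem_coe, Finset.mem_erase]
          exact ⟨a, ⟨ha, Finset.mem_univ a⟩, hva⟩
        rcases lt_trichotomy z (Qf z) with hcase | hcase | hcase
        · rw [hg]
          simp only
          rw [if_pos hcase, hAz, hbot' i (by rw [Function.update_self, hq'Q]; exact hcase)]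
        · -- marginal: z = Qf z
          have hq'z : q' = z := by rw [hq'Q, ← hcase]
          have hgz : g z = m z := by
            rw [hg]; simp only
            rw [if_neg (by rw [← hcase]; exact lt_irrefl z),
              if_neg (by rw [← hcase]; exact lt_irrefl z)]
          rw [hgz, hAz]
          have hsplit := Finset.add_sum_erase Finset.univ xz (Finset.mem_univ i)
          have hterm : ∀ a ∈ Finset.univ.erase i,
              xz a = (if z < v a then B a else 0) / z - (if v a < z then Γ a else 0) := by
            intro a ha
            have hai : a ≠ i := Finset.ne_of_mem_erase ha
            have hua : Function.update v i z a = v a := Function.update_of_ne hai _ _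
            rcases lt_or_gt_of_ne (hne a hai) with h' | h'
            · rw [hbot' a (by rw [hua, hq'z]; exact h')]
              rw [if_neg (not_lt.mpr h'.le), if_pos h']
              simp
            · rw [htop' a (by rw [hua, hq'z]; exact h')]
              rw [if_pos h', if_neg (not_lt.mpr h'.le), hq'z]
              simp
          have hsum2 : ∑ a ∈ Finset.univ.erase i, xz a =
              (∑ a ∈ Finset.univ.erase i, if z < v a then B a else 0) / z
              - (∑ a ∈ Finset.univ.erase i, if v a < z then Γ a else 0) := by
            rw [Finset.sum_congr rfl hterm, Finset.sum_sub_distrib, Finset.sum_div]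
          rw [hm]
          simp only
          have : xz i + ∑ a ∈ Finset.univ.erase i, xz a = 0 := by rw [hsplit]; exact hsum'
          rw [hsum2] at this
          linarith
        · rw [hg]
          simp only
          rw [if_neg (not_lt.mpr hcase.le), if_pos hcase, hAz,
            htop' i (by rw [Function.update_self, hq'Q]; exact hcase), hq'Q]
      -- uniform bound on g
      set Gtot : ℝ := ∑ a, Γ a with hGtot
      have hGpos : 0 < Gtot := by
        have h1 : Tle n Γ v q ≤ Gtot := by
          rw [hGtot]
          apply Finset.sum_le_sum
          intro a _
          split
          · exact le_refl _
          · exact hΓ a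
        linarith [hCP.2.2.2]
      have hTleG : ∀ (u' : Fin n → ℝ) (p' : ℝ), Tle n Γ u' p' ≤ Gtot := by
        intro u' p'
        rw [hGtot]
        apply Finset.sum_le_sum
        intro a _
        split
        · exact le_refl _
        · exact hΓ a
      have hgbound : ∀ z ∈ Set.Ioc (vhat i) q, |g z| ≤ Gtot := by
        intro z hz
        have hz0 : 0 ≤ z := le_trans (hvhat0 i) hz.1.le
        have hzpos : 0 < z ∨ 0 = z := lt_or_eq_of_le hz0
        have hQz := hQf z
        rw [max_eq_left hz0] at hQz
        have hQpos : 0 < Qf z := hQz.1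
        rw [hg]
        simp only
        rcases lt_trichotomy z (Qf z) with hcase | hcase | hcase
        · rw [if_pos hcase, abs_neg, abs_of_nonneg (hΓ i)]
          rw [hGtot]
          exact Finset.single_le_sum (fun a _ => hΓ a) (Finset.mem_univ i)
        · have hzp : 0 < z := by rw [hcase]; exact hQpos
          rw [if_neg (show ¬ z < Qf z by rw [← hcase]; exact lt_irrefl z),
            if_neg (show ¬ Qf z < z by rw [← hcase]; exact lt_irrefl z)]
          rw [hm]
          simp only
          set S1 : ℝ := ∑ a ∈ Finset.univ.erase i, if v a < z then Γ a else 0 with hS1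
          set S2 : ℝ := ∑ a ∈ Finset.univ.erase i, if z < v a then B a else 0 with hS2
          have hS1n : 0 ≤ S1 := by
            rw [hS1]
            apply Finset.sum_nonneg
            intro a _
            split
            · exact hΓ a
            · exact le_refl 0
          have hS1le : S1 ≤ Gtot := by
            rw [hS1, hGtot]
            calc (∑ a ∈ Finset.univ.erase i, if v a < z then Γ a else 0)
                ≤ ∑ a ∈ Finset.univ.erase i, Γ a := by
                  apply Finset.sum_le_sum
                  intro a _
                  split
                  · exact le_refl _
                  · exact hΓ a
              _ ≤ ∑ a, Γ a := Finset.sum_le_sum_of_subset_of_nonneg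
                  (Finset.erase_subset i Finset.univ) (fun a _ _ => hΓ a)
          have hS2le : S2 ≤ z * Gtot := by
            have h1 : S2 ≤ Sgt n B (Function.update v i z) (Qf z) := by
              have he : S2 = ∑ a ∈ Finset.univ.erase i,
                  (if Qf z < Function.update v i z a then B a else 0) := by
                rw [hS2]
                apply Finset.sum_congr rfl
                intro a ha
                rw [Function.update_of_ne (Finset.ne_of_mem_erase ha), ← hcase]
              rw [he]
              unfold Sgt
              apply Finset.sum_le_sum_of_subset_of_nonneg
                (Finset.erase_subset i Finset.univ)
              intro a _ _
              split
              · exact (hB a).le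
              · exact le_refl 0
            calc S2 ≤ Sgt n B (Function.update v i z) (Qf z) := h1
              _ ≤ Qf z * Tle n Γ (Function.update v i z) (Qf z) := hQz.2.1
              _ ≤ Qf z * Gtot := mul_le_mul_of_nonneg_left (hTleG _ _) hQpos.le
              _ = z * Gtot := by rw [← hcase]
          have hS2n : 0 ≤ S2 / z := by
            apply div_nonneg ?_ hzp.le
            rw [hS2]
            apply Finset.sum_nonneg
            intro a _
            split
            · exact (hB a).le
            · exact le_refl 0
          have hS2d : S2 / z ≤ Gtot := by
            rw [div_le_iff₀ hzp]
            linarith [hS2le, mul_comm z Gtot]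
          rw [abs_le]
          constructor
          · linarith
          · linarith
        · rw [if_neg (not_lt.mpr hcase.le), if_pos hcase]
          have hSgt : B i ≤ Sgt n B (Function.update v i z) (Qf z) := by
            have hterm := Finset.single_le_sum
              (f := fun a => if Qf z < Function.update v i z a then B a else 0)
              (fun a _ => by split
                             · exact (hB a).le
                             · exact le_refl 0)
              (Finset.mem_univ i)
            simp only [Function.update_self, if_pos hcase] at hterm
            exact hterm
          have h2 : Sgt n B (Function.update v i z) (Qf z) ≤ Qf z * Gtot := by
            calc Sgt n B (Function.update v i z) (Qf z)
                ≤ Qf z * Tle n Γ (Function.update v i z) (Qf z) := hQz.2.1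
              _ ≤ Qf z * Gtot := mul_le_mul_of_nonneg_left (hTleG _ _) hQpos.le
          have h3 : B i / Qf z ≤ Gtot := by
            rw [div_le_iff₀ hQpos]
            nlinarith
          rw [abs_of_nonneg (div_pos (hB i) hQpos).le]
          exact h3
      have hint1 : IntervalIntegrable (A i) MeasureTheory.volume (vhat i) q := by
        rw [intervalIntegrable_iff_integrableOn_Ioc_of_le hvq]
        have hgint : MeasureTheory.IntegrableOn g (Set.Ioc (vhat i) q)
            MeasureTheory.volume := by
          refine MeasureTheory.Integrable.mono'
            (g := fun _ => Gtot)
            (MeasureTheory.integrableOn_const measure_Ioc_lt_top.ne)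
            hgmeas.aestronglyMeasurable.restrict ?_
          exact (MeasureTheory.ae_restrict_iff' measurableSet_Ioc).mpr
            (Filter.Eventually.of_forall hgbound)
        apply hgint.congr
        have h1 : ∀ᵐ z ∂(MeasureTheory.volume.restrict (Set.Ioc (vhat i) q)), z ∉ F := by
          apply MeasureTheory.ae_restrict_of_ae
          rw [MeasureTheory.ae_iff]
          have he : {z : ℝ | ¬ z ∉ F} = F := by ext z; simp
          rw [he]
          exact hFzero
        filter_upwards [MeasureTheory.ae_restrict_mem measurableSet_Ioc, h1] with z hz hzF
        exact (hAg z (le_trans (hvhat0 i) hz.1.le) hzF).symm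
      have hadd := intervalIntegral.integral_add_adjacent_intervals hint1 hint2
      have h0 : 0 ≤ ∫ z in (vhat i)..q, A i z := hnonneg q hvq
      rw [hxtop, ← hadd, hval2]
      have hBq : q * (B i / q) = B i := by field_simp
      nlinarith [h0]
  · -- v i < vhat i
    have hneg : ∫ z in (v i)..(vhat i), A i z ≤ 0 := by
      rw [intervalIntegral.integral_of_le hvi.le]
      apply MeasureTheory.integral_nonpos_of_ae
      have h1 : ∀ᵐ z ∂(MeasureTheory.volume.restrict (Set.Ioc (v i) (vhat i))),
          z ∈ Set.Ioc (v i) (vhat i) := MeasureTheory.ae_restrict_mem measurableSet_Ioc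
      have h2 : ∀ᵐ z ∂(MeasureTheory.volume.restrict (Set.Ioc (v i) (vhat i))),
          z ≠ vhat i := by
        apply MeasureTheory.ae_restrict_of_ae
        rw [MeasureTheory.ae_iff]
        have : {z : ℝ | ¬ z ≠ vhat i} = {vhat i} := by
          ext z; simp
        rw [this]
        exact Real.volume_singleton
      filter_upwards [h1, h2] with z hz hzne
      have hlt : z < vhat i := lt_of_le_of_ne hz.2 hzne
      have h3 := (hcross i (vhat i - z) (by linarith)).1
      rw [show vhat i - (vhat i - z) = z from by ring] at h3
      exact h3
    have hAneg : A i (v i) ≤ 0 := by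
      have h3 := (hcross i (vhat i - v i) (by linarith)).1
      rw [show vhat i - (vhat i - v i) = v i from by ring] at h3
      exact h3
    have hsymm : ∫ z in (vhat i)..(v i), A i z = - ∫ z in (v i)..(vhat i), A i z :=
      intervalIntegral.integral_symm _ _
    have hprod : v i * A i (v i) ≤ 0 := mul_nonpos_iff.mpr (Or.inl ⟨hv i, hAneg⟩)
    rw [hsymm]
    linarith [hB i]
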